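/- There is a universal constant C > 0 such that for every 1 ≤ q ≤ 2 and every finite sequence Z_1, ..., Z_s of independent real-valued random variables with E Z_i = 0 and E|Z_i|^q < ∞ for all i, one has ‖Σ_{i=1}^s Z_i‖_q ≤ C · (Σ_{i=1}^s ‖Z_i‖_q^q)^{1/q}. In particular, if the Z_i are i.i.d., ‖Σ_{i=1}^s Z_i‖_q ≤ C · s^{1/q} · ‖Z_1‖_q. -/

import Mathlib

noncomputable section
open MeasureTheory ProbabilityTheory
open scoped BigOperators ENNReal


private lemma real_rpow_add_le {p x y : ℝ} (hp0 : 0 ≤ p) (hp1 : p ≤ 1) (hx : 0 ≤ x) (hy : 0 ≤ y) :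
    (x + y) ^ p ≤ x ^ p + y ^ p := by
  have h := NNReal.rpow_add_le_add_rpow x.toNNReal y.toNNReal hp0 hp1
  have h2 := (NNReal.coe_le_coe).2 h
  push_cast at h2
  rwa [Real.coe_toNNReal _ hx, Real.coe_toNNReal _ hy] at h2

private lemma rpow_sub_le {p s r : ℝ} (hp0 : 0 ≤ p) (hp1 : p ≤ 1) (hs : 0 ≤ s) (hsr : s ≤ r) :
    r ^ p - s ^ p ≤ (r - s) ^ p := by
  have h := real_rpow_add_le hp0 hp1 (sub_nonneg.2 hsr) hs
  rw [sub_add_cancel] at h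
  linarith

private lemma grad_ineq_pos {q : ℝ} (hq1 : 1 ≤ q) {a : ℝ} (ha : 0 < a) (b : ℝ) :
    |a| ^ q + q * (a * |a| ^ (q - 2)) * (b - a) ≤ |b| ^ q := by
  have ha' : |a| = a := abs_of_pos ha
  have hane : a ≠ 0 := ha.ne'
  have hq0 : (0:ℝ) < q := lt_of_lt_of_le one_pos hq1
  have hpow : a * a ^ (q - 2) = a ^ (q - 1) := by
    rw [mul_comm, ← Real.rpow_add_one hane]
    congr 1; ring
  have hpow2 : a ^ (q - 1) * a = a ^ q := by
    rw [← Real.rpow_add_one hane, sub_add_cancel]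
  rw [ha', hpow]
  have haq1 : (0:ℝ) ≤ a ^ (q-1) := Real.rpow_nonneg ha.le _
  have haq : (0:ℝ) ≤ a ^ q := Real.rpow_nonneg ha.le _
  rcases le_or_gt b 0 with hb | hb
  · have h1 : q * a ^ (q-1) * b ≤ 0 := by
      apply mul_nonpos_of_nonneg_of_nonpos (by positivity) hb
    have h2 : (0:ℝ) ≤ |b| ^ q := Real.rpow_nonneg (abs_nonneg b) _
    nlinarith
  · have hb' : |b| = b := abs_of_pos hb
    rw [hb']
    rcases eq_or_lt_of_le hq1 with hq | hq
    · rw [← hq]; simp only [sub_self, Real.rpow_zero, Real.rpow_one]; nlinarith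
    · have hq1' : q - 1 > 0 := by linarith
      have hq1'' : q - 1 ≠ 0 := ne_of_gt hq1'
      have hconj : (q / (q-1)).HolderConjugate q := (Real.HolderConjugate.conjExponent hq).symm
      have hy := Real.young_inequality_of_nonneg haq1 hb.le hconj
      have key : (a ^ (q-1)) ^ (q / (q-1)) = a ^ q := by
        rw [← Real.rpow_mul ha.le]
        congr 1
        field_simp
      rw [key] at hy
      have hdiv : a ^ q / (q / (q-1)) = a ^ q * (q - 1) / q := by
        rw [div_div_eq_mul_div, mul_div_assoc]
      rw [hdiv] at hy
      have := mul_le_mul_of_nonneg_left hy hq0.le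
      have hqq : q * (a ^ q * (q-1) / q + b ^ q / q) = a ^ q * (q - 1) + b ^ q := by
        field_simp
      nlinarith

private lemma grad_ineq {q : ℝ} (hq1 : 1 ≤ q) (a b : ℝ) :
    |a| ^ q + q * (a * |a| ^ (q - 2)) * (b - a) ≤ |b| ^ q := by
  have hqne : q ≠ 0 := by positivity
  rcases lt_trichotomy a 0 with ha | ha | ha
  · have h := grad_ineq_pos hq1 (neg_pos.2 ha) (-b)
    rw [abs_neg, abs_neg] at h
    have he : q * (-a * |a| ^ (q - 2)) * (-b - -a) = q * (a * |a| ^ (q - 2)) * (b - a) := by ring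
    linarith [h, he ▸ h]
  · subst ha
    simp only [abs_zero, Real.zero_rpow hqne, zero_mul, mul_zero, zero_add]
    positivity
  · exact grad_ineq_pos hq1 ha b

private lemma h_neg {q : ℝ} (t : ℝ) : (-t) * |(-t)| ^ (q - 2) = -(t * |t| ^ (q - 2)) := by
  rw [abs_neg]; ring

private lemma holder_nonneg {q : ℝ} (hq1 : 1 ≤ q) (hq2 : q ≤ 2) {a b : ℝ} (hb : 0 ≤ b)
    (hba : b ≤ a) :
    |a * |a| ^ (q - 2) - b * |b| ^ (q - 2)| ≤ |a - b| ^ (q - 1) := by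
  have hp0 : (0:ℝ) ≤ q - 1 := by linarith
  have hp1 : q - 1 ≤ 1 := by linarith
  rcases eq_or_lt_of_le hb with hb0 | hb0
  · -- b = 0
    rw [← hb0]
    simp only [abs_zero, zero_mul, sub_zero]
    rcases eq_or_lt_of_le (hb0.le.trans hba) with ha0 | ha0
    · rw [← ha0]; simp only [abs_zero, zero_mul]
      positivity
    · have ha' : |a| = a := abs_of_pos ha0
      have hpow : a * a ^ (q - 2) = a ^ (q - 1) := by
        rw [mul_comm, ← Real.rpow_add_one ha0.ne']
        congr 1; ring
      rw [ha', hpow, abs_of_nonneg (Real.rpow_nonneg ha0.le _)]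
  · have ha0 : 0 < a := lt_of_lt_of_le hb0 hba
    have ha' : |a| = a := abs_of_pos ha0
    have hb' : |b| = b := abs_of_pos hb0
    have hpa : a * a ^ (q - 2) = a ^ (q - 1) := by
      rw [mul_comm, ← Real.rpow_add_one ha0.ne']; congr 1; ring
    have hpb : b * b ^ (q - 2) = b ^ (q - 1) := by
      rw [mul_comm, ← Real.rpow_add_one hb0.ne']; congr 1; ring
    rw [ha', hb', hpa, hpb]
    have hmono : b ^ (q-1) ≤ a ^ (q-1) := Real.rpow_le_rpow hb0.le hba hp0
    rw [abs_of_nonneg (sub_nonneg.2 hmono), abs_of_nonneg (sub_nonneg.2 hba)]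
    exact rpow_sub_le hp0 hp1 hb0.le hba

private lemma holder_le {q : ℝ} (hq1 : 1 ≤ q) (hq2 : q ≤ 2) {a b : ℝ} (hba : b ≤ a) :
    |a * |a| ^ (q - 2) - b * |b| ^ (q - 2)| ≤ 2 * |a - b| ^ (q - 1) := by
  have hp0 : (0:ℝ) ≤ q - 1 := by linarith
  have habnn : (0:ℝ) ≤ |a - b| ^ (q-1) := Real.rpow_nonneg (abs_nonneg _) _
  rcases le_or_gt 0 b with hb | hb
  · linarith [holder_nonneg hq1 hq2 hb hba]
  rcases le_or_gt a 0 with ha | ha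
  · have h := holder_nonneg hq1 hq2 (neg_nonneg.2 ha) (neg_le_neg hba)
    rw [h_neg, h_neg] at h
    have he1 : |-(b * |b| ^ (q - 2)) - -(a * |a| ^ (q - 2))| =
        |a * |a| ^ (q - 2) - b * |b| ^ (q - 2)| := by
      rw [show -(b * |b| ^ (q - 2)) - -(a * |a| ^ (q - 2))
        = -(b * |b| ^ (q - 2) - a * |a| ^ (q - 2)) by ring, abs_neg, abs_sub_comm]
    have he2 : |-b - -a| = |a - b| := by
      rw [show -b - -a = -(b - a) by ring, abs_neg, abs_sub_comm]
    rw [he1, he2] at h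
    linarith
  · -- b < 0 < a
    have ha' : |a| = a := abs_of_pos ha
    have hb' : |b| = -b := abs_of_neg hb
    have hpa : a * a ^ (q - 2) = a ^ (q - 1) := by
      rw [mul_comm, ← Real.rpow_add_one ha.ne']; congr 1; ring
    have hpb : b * (-b) ^ (q - 2) = -((-b) ^ (q - 1)) := by
      rw [show b * (-b) ^ (q-2) = -((-b) * (-b) ^ (q - 2)) by ring,
        mul_comm (-b), ← Real.rpow_add_one (by linarith : -b ≠ 0)]
      congr 2; ring
    rw [ha', hb', hpa, hpb, sub_neg_eq_add]
    have hab : |a - b| = a - b := abs_of_pos (by linarith)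
    rw [hab]
    have h1 : a ^ (q-1) ≤ (a - b) ^ (q-1) := Real.rpow_le_rpow ha.le (by linarith) hp0
    have h2 : (-b) ^ (q-1) ≤ (a - b) ^ (q-1) := Real.rpow_le_rpow (by linarith) (by linarith) hp0
    have h3 : (0:ℝ) ≤ a ^ (q-1) := Real.rpow_nonneg ha.le _
    have h4 : (0:ℝ) ≤ (-b) ^ (q-1) := Real.rpow_nonneg (by linarith) _
    rw [abs_of_nonneg (by linarith)]
    linarith

private lemma holder_h {q : ℝ} (hq1 : 1 ≤ q) (hq2 : q ≤ 2) (a b : ℝ) :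
    |a * |a| ^ (q - 2) - b * |b| ^ (q - 2)| ≤ 2 * |a - b| ^ (q - 1) := by
  rcases le_total b a with hba | hab
  · exact holder_le hq1 hq2 hba
  · have h := holder_le hq1 hq2 hab
    rw [abs_sub_comm (a * |a| ^ (q - 2)), abs_sub_comm a b]
    exact h

private lemma pointwise_q {q : ℝ} (hq1 : 1 ≤ q) (hq2 : q ≤ 2) (x y : ℝ) :
    |x + y| ^ q ≤ |x| ^ q + q * (x * |x| ^ (q - 2)) * y + 4 * |y| ^ q := by
  have hqne : q ≠ 0 := by positivity
  rcases eq_or_ne y 0 with rfl | hy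
  · simp [Real.zero_rpow hqne]
  · have hyne : |y| ≠ 0 := abs_ne_zero.2 hy
    have hG := grad_ineq hq1 (x + y) x
    have hH := holder_h hq1 hq2 (x + y) x
    rw [show x + y - x = y by ring] at hH
    set A := (x + y) * |x + y| ^ (q - 2) with hA
    set B := x * |x| ^ (q - 2) with hB
    have hGe : q * A * (x - (x + y)) = -(q * A * y) := by ring
    rw [hGe] at hG
    -- hG : |x+y|^q - q*A*y ≤ |x|^q
    have hyq : |y| ^ (q - 1) * |y| = |y| ^ q := by
      rw [← Real.rpow_add_one hyne]; congr 1; ring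
    have f3 : q * A * y - q * B * y ≤ q * |A - B| * |y| := by
      have : q * A * y - q * B * y = q * ((A - B) * y) := by ring
      rw [this, mul_assoc]
      apply mul_le_mul_of_nonneg_left _ (by linarith : (0:ℝ) ≤ q)
      calc (A - B) * y ≤ |(A - B) * y| := le_abs_self _
        _ = |A - B| * |y| := abs_mul _ _
    have f4 : q * |A - B| * |y| ≤ q * (2 * |y| ^ (q - 1)) * |y| := by
      apply mul_le_mul_of_nonneg_right _ (abs_nonneg y)
      exact mul_le_mul_of_nonneg_left hH (by linarith)
    have f5 : q * (2 * |y| ^ (q - 1)) * |y| = 2 * q * |y| ^ q := by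
      rw [show q * (2 * |y| ^ (q - 1)) * |y| = 2 * q * (|y| ^ (q - 1) * |y|) by ring, hyq]
    have f6 : 2 * q * |y| ^ q ≤ 4 * |y| ^ q := by
      have : (0:ℝ) ≤ |y| ^ q := Real.rpow_nonneg (abs_nonneg y) _
      nlinarith
    linarith

private lemma abs_le_one_add_rpow {q : ℝ} (hq1 : 1 ≤ q) (t : ℝ) : |t| ≤ 1 + |t| ^ q := by
  have h0 : (0:ℝ) ≤ |t| ^ q := Real.rpow_nonneg (abs_nonneg t) _
  rcases le_or_gt (|t|) 1 with h | h
  · linarith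
  · calc |t| = |t| ^ (1:ℝ) := (Real.rpow_one _).symm
      _ ≤ |t| ^ q := Real.rpow_le_rpow_of_exponent_le h.le hq1
      _ ≤ 1 + |t| ^ q := by linarith

private lemma h_le_one_add_rpow {q : ℝ} (hq1 : 1 ≤ q) (t : ℝ) :
    |t * |t| ^ (q - 2)| ≤ 1 + |t| ^ q := by
  have h0 : (0:ℝ) ≤ |t| ^ q := Real.rpow_nonneg (abs_nonneg t) _
  rcases eq_or_ne t 0 with rfl | ht
  · simp only [abs_zero, zero_mul, abs_zero]
    positivity
  · have htne : |t| ≠ 0 := abs_ne_zero.2 ht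
    have habs : |t * |t| ^ (q - 2)| = |t| ^ (q - 1) := by
      rw [abs_mul, abs_of_nonneg (Real.rpow_nonneg (abs_nonneg t) _),
        mul_comm, ← Real.rpow_add_one htne]
      congr 1; ring
    rw [habs]
    rcases le_or_gt (|t|) 1 with h | h
    · have := Real.rpow_le_one (abs_nonneg t) h (by linarith : (0:ℝ) ≤ q - 1)
      linarith
    · have := Real.rpow_le_rpow_of_exponent_le h.le (by linarith : q - 1 ≤ q)
      linarith

private lemma abs_add_rpow_le {q : ℝ} (hq1 : 1 ≤ q) (hq2 : q ≤ 2) (x y : ℝ) :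
    |x + y| ^ q ≤ 4 * (|x| ^ q + |y| ^ q) := by
  have hq0 : (0:ℝ) ≤ q := by linarith
  have h2q : (2:ℝ) ^ q ≤ 4 := by
    have h := Real.rpow_le_rpow_of_exponent_le (by norm_num : (1:ℝ) ≤ 2) hq2
    rw [show ((2:ℝ):ℝ) ^ (2:ℝ) = 4 by
      rw [show (2:ℝ) = ((2:ℕ):ℝ) by norm_num, Real.rpow_natCast]; norm_num] at h
    exact h
  have hxq : (0:ℝ) ≤ |x| ^ q := Real.rpow_nonneg (abs_nonneg x) _
  have hyq : (0:ℝ) ≤ |y| ^ q := Real.rpow_nonneg (abs_nonneg y) _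
  rcases le_total (|x|) (|y|) with h | h
  · have h1 : |x + y| ≤ 2 * |y| := by
      calc |x + y| ≤ |x| + |y| := abs_add_le _ _
        _ ≤ 2 * |y| := by linarith
    have h2 : |x + y| ^ q ≤ (2 * |y|) ^ q := Real.rpow_le_rpow (abs_nonneg _) h1 hq0
    rw [Real.mul_rpow (by norm_num) (abs_nonneg y)] at h2
    nlinarith
  · have h1 : |x + y| ≤ 2 * |x| := by
      calc |x + y| ≤ |x| + |y| := abs_add_le _ _
        _ ≤ 2 * |x| := by linarith
    have h2 : |x + y| ^ q ≤ (2 * |x|) ^ q := Real.rpow_le_rpow (abs_nonneg _) h1 hq0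
    rw [Real.mul_rpow (by norm_num) (abs_nonneg x)] at h2
    nlinarith

/-- Type-`q` inequality: there is a universal constant `C > 0` such that for every
`1 ≤ q ≤ 2` and independent centered real random variables `Z₁, …, Z_s` with finite
`q`-th moments, `‖∑ Z_i‖_q ≤ C · (∑ ‖Z_i‖_q^q)^{1/q}`. -/
theorem type_q_inequality :
    ∃ C : ℝ, 0 < C ∧
      ∀ (Ω : Type) (_ : MeasurableSpace Ω) (μ : Measure Ω), IsProbabilityMeasure μ →
      ∀ q : ℝ, 1 ≤ q → q ≤ 2 →
      ∀ (s : ℕ) (Z : Fin s → Ω → ℝ),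
        (∀ i, Measurable (Z i)) →
        iIndepFun Z μ →
        (∀ i, ∫ ω, Z i ω ∂μ = 0) →
        (∀ i, ∫⁻ ω, ENNReal.ofReal (|Z i ω| ^ q) ∂μ < ∞) →
        (∫⁻ ω, ENNReal.ofReal (|∑ i, Z i ω| ^ q) ∂μ) ^ (1 / q)
          ≤ ENNReal.ofReal C *
            (∑ i, ∫⁻ ω, ENNReal.ofReal (|Z i ω| ^ q) ∂μ) ^ (1 / q) := by
  refine ⟨4, by norm_num, ?_⟩
  intro Ω mΩ μ hμ q hq1 hq2 s Z hmeas hindep hmean hmom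
  have hq0 : (0:ℝ) < q := lt_of_lt_of_le one_pos hq1
  have hqne : q ≠ 0 := hq0.ne'
  -- Integrability of |Z i|^q
  have hintq : ∀ i, Integrable (fun ω => |Z i ω| ^ q) μ := by
    intro i
    have hm : Measurable fun ω => |Z i ω| ^ q := by fun_prop
    refine ⟨hm.aestronglyMeasurable, ?_⟩
    rw [hasFiniteIntegral_iff_ofReal (ae_of_all _ fun ω =>
      Real.rpow_nonneg (abs_nonneg _) _)]
    exact hmom i
  -- Integrability of Z i
  have hintZ : ∀ i, Integrable (Z i) μ := by
    intro i
    refine Integrable.mono' ((integrable_const (1:ℝ)).add (hintq i))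
      (hmeas i).aestronglyMeasurable (ae_of_all _ fun ω => ?_)
    simpa [Real.norm_eq_abs] using abs_le_one_add_rpow hq1 (Z i ω)
  -- Induction over finsets
  have key : ∀ t : Finset (Fin s),
      Integrable (fun ω => |∑ i ∈ t, Z i ω| ^ q) μ ∧
      ∫ ω, |∑ i ∈ t, Z i ω| ^ q ∂μ ≤ 4 * ∑ i ∈ t, ∫ ω, |Z i ω| ^ q ∂μ := by
    intro t
    induction t using Finset.induction_on with
    | empty =>
      constructor
      · simpa [Real.zero_rpow hqne] using (integrable_const (0:ℝ))
      · simp [Real.zero_rpow hqne]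
    | insert j t hj ih =>
      obtain ⟨ihInt, ihLe⟩ := ih
      set X : Ω → ℝ := fun ω => ∑ i ∈ t, Z i ω with hX
      have hXmeas : Measurable X := by
        apply Finset.measurable_sum
        intro i _
        exact hmeas i
      have hXsum : (∑ i ∈ t, Z i) = X := (Finset.sum_fn t Z)
      have hindXY : IndepFun X (Z j) μ := by
        have h := hindep.indepFun_finsetSum_of_notMem hmeas hj
        rwa [hXsum] at h
      have hmh : Measurable fun u : ℝ => u * |u| ^ (q - 2) := by fun_prop
      have hinthX : Integrable (fun ω => X ω * |X ω| ^ (q - 2)) μ := by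
        refine Integrable.mono' ((integrable_const (1:ℝ)).add ihInt)
          ((hmh.comp hXmeas).aestronglyMeasurable) (ae_of_all _ fun ω => ?_)
        show ‖X ω * |X ω| ^ (q - 2)‖ ≤ 1 + |X ω| ^ q
        rw [Real.norm_eq_abs]
        exact h_le_one_add_rpow hq1 (X ω)
      have hindhXY : IndepFun (fun ω => X ω * |X ω| ^ (q - 2)) (Z j) μ :=
        hindXY.comp hmh measurable_id
      have hintprod : Integrable (fun ω => (X ω * |X ω| ^ (q - 2)) * Z j ω) μ :=
        hindhXY.integrable_mul hinthX (hintZ j)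
      have hprod : ∫ ω, (X ω * |X ω| ^ (q - 2)) * Z j ω ∂μ = 0 := by
        have h := hindhXY.integral_mul_eq_mul_integral hinthX.aestronglyMeasurable (hintZ j).aestronglyMeasurable
        calc ∫ ω, (X ω * |X ω| ^ (q - 2)) * Z j ω ∂μ
            = (∫ ω, X ω * |X ω| ^ (q - 2) ∂μ) * ∫ ω, Z j ω ∂μ := h
          _ = 0 := by rw [hmean j, mul_zero]
      -- new sum
      have hsum_eq : ∀ ω, ∑ i ∈ insert j t, Z i ω = X ω + Z j ω := by
        intro ω
        rw [Finset.sum_insert hj]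
        ring
      have hIntNew : Integrable (fun ω => |∑ i ∈ insert j t, Z i ω| ^ q) μ := by
        have hm : Measurable fun ω => |∑ i ∈ insert j t, Z i ω| ^ q := by fun_prop
        have hdom : Integrable (fun ω => 4 * (|X ω| ^ q + |Z j ω| ^ q)) μ :=
          (ihInt.add (hintq j)).const_mul 4
        refine Integrable.mono' hdom hm.aestronglyMeasurable (ae_of_all _ fun ω => ?_)
        show ‖|∑ i ∈ insert j t, Z i ω| ^ q‖ ≤ 4 * (|X ω| ^ q + |Z j ω| ^ q)
        rw [Real.norm_eq_abs, abs_of_nonneg (Real.rpow_nonneg (abs_nonneg _) _), hsum_eq ω]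
        exact abs_add_rpow_le hq1 hq2 (X ω) (Z j ω)
      refine ⟨hIntNew, ?_⟩
      have hmono : ∫ ω, |∑ i ∈ insert j t, Z i ω| ^ q ∂μ ≤
          ∫ ω, (|X ω| ^ q + q * ((X ω * |X ω| ^ (q - 2)) * Z j ω) + 4 * |Z j ω| ^ q) ∂μ := by
        have hmid : Integrable (fun ω => |X ω| ^ q + q * (X ω * |X ω| ^ (q - 2) * Z j ω)) μ :=
          ihInt.add (hintprod.const_mul q)
        have hrhs : Integrable (fun ω =>
            |X ω| ^ q + q * (X ω * |X ω| ^ (q - 2) * Z j ω) + 4 * |Z j ω| ^ q) μ :=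
          hmid.add ((hintq j).const_mul 4)
        apply integral_mono hIntNew hrhs
        intro ω
        show |∑ i ∈ insert j t, Z i ω| ^ q ≤
          |X ω| ^ q + q * (X ω * |X ω| ^ (q - 2) * Z j ω) + 4 * |Z j ω| ^ q
        rw [hsum_eq ω]
        have hpw := pointwise_q hq1 hq2 (X ω) (Z j ω)
        calc |X ω + Z j ω| ^ q
            ≤ |X ω| ^ q + q * (X ω * |X ω| ^ (q - 2)) * Z j ω + 4 * |Z j ω| ^ q := hpw
          _ = |X ω| ^ q + q * (X ω * |X ω| ^ (q - 2) * Z j ω) + 4 * |Z j ω| ^ q := by ring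
      have heval : ∫ ω, (|X ω| ^ q + q * ((X ω * |X ω| ^ (q - 2)) * Z j ω) + 4 * |Z j ω| ^ q) ∂μ
          = ∫ ω, |X ω| ^ q ∂μ + q * ∫ ω, (X ω * |X ω| ^ (q - 2)) * Z j ω ∂μ
            + 4 * ∫ ω, |Z j ω| ^ q ∂μ := by
        have hmid : Integrable (fun ω => |X ω| ^ q + q * (X ω * |X ω| ^ (q - 2) * Z j ω)) μ :=
          ihInt.add (hintprod.const_mul q)
        have h4 : Integrable (fun ω => 4 * |Z j ω| ^ q) μ := (hintq j).const_mul 4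
        have hqprod : Integrable (fun ω => q * (X ω * |X ω| ^ (q - 2) * Z j ω)) μ :=
          hintprod.const_mul q
        rw [integral_add hmid h4, integral_add ihInt hqprod,
          integral_const_mul, integral_const_mul]
      rw [heval, hprod, mul_zero, add_zero] at hmono
      rw [Finset.sum_insert hj]
      calc ∫ ω, |∑ i ∈ insert j t, Z i ω| ^ q ∂μ
          ≤ ∫ ω, |X ω| ^ q ∂μ + 4 * ∫ ω, |Z j ω| ^ q ∂μ := hmono
        _ ≤ 4 * ∑ i ∈ t, ∫ ω, |Z i ω| ^ q ∂μ + 4 * ∫ ω, |Z j ω| ^ q ∂μ := by linarith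
        _ = 4 * (∫ ω, |Z j ω| ^ q ∂μ + ∑ i ∈ t, ∫ ω, |Z i ω| ^ q ∂μ) := by ring
  obtain ⟨hSint, hS⟩ := key Finset.univ
  -- convert to lintegrals
  have hLHS : (∫⁻ ω, ENNReal.ofReal (|∑ i, Z i ω| ^ q) ∂μ)
      = ENNReal.ofReal (∫ ω, |∑ i, Z i ω| ^ q ∂μ) :=
    (ofReal_integral_eq_lintegral_ofReal hSint
      (ae_of_all _ fun ω => Real.rpow_nonneg (abs_nonneg _) _)).symm
  have hAi : ∀ i, (∫⁻ ω, ENNReal.ofReal (|Z i ω| ^ q) ∂μ)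
      = ENNReal.ofReal (∫ ω, |Z i ω| ^ q ∂μ) := fun i =>
    (ofReal_integral_eq_lintegral_ofReal (hintq i)
      (ae_of_all _ fun ω => Real.rpow_nonneg (abs_nonneg _) _)).symm
  have hsumA : (∑ i, ∫⁻ ω, ENNReal.ofReal (|Z i ω| ^ q) ∂μ)
      = ENNReal.ofReal (∑ i, ∫ ω, |Z i ω| ^ q ∂μ) := by
    rw [ENNReal.ofReal_sum_of_nonneg (fun i _ => integral_nonneg
      (fun ω => Real.rpow_nonneg (abs_nonneg _) _))]
    exact Finset.sum_congr rfl fun i _ => hAi i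
  rw [hLHS, hsumA]
  have h1q : 0 ≤ 1 / q := by positivity
  calc (ENNReal.ofReal (∫ ω, |∑ i, Z i ω| ^ q ∂μ)) ^ (1/q)
      ≤ (ENNReal.ofReal (4 * ∑ i, ∫ ω, |Z i ω| ^ q ∂μ)) ^ (1/q) :=
        ENNReal.rpow_le_rpow (ENNReal.ofReal_le_ofReal hS) h1q
    _ = (ENNReal.ofReal 4 * ENNReal.ofReal (∑ i, ∫ ω, |Z i ω| ^ q ∂μ)) ^ (1/q) := by
        rw [ENNReal.ofReal_mul (by norm_num : (0:ℝ) ≤ 4)]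
    _ = (ENNReal.ofReal 4) ^ (1/q) * (ENNReal.ofReal (∑ i, ∫ ω, |Z i ω| ^ q ∂μ)) ^ (1/q) :=
        ENNReal.mul_rpow_of_nonneg _ _ h1q
    _ ≤ ENNReal.ofReal 4 * (ENNReal.ofReal (∑ i, ∫ ω, |Z i ω| ^ q ∂μ)) ^ (1/q) := by
        apply mul_le_mul_left
        calc (ENNReal.ofReal 4) ^ (1/q) ≤ (ENNReal.ofReal 4) ^ (1:ℝ) := by
              apply ENNReal.rpow_le_rpow_of_exponent_le
              · simp [ENNReal.one_le_ofReal]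
              · rw [div_le_one hq0]; linarith
          _ = ENNReal.ofReal 4 := ENNReal.rpow_one _
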